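/- Let (X,μ,S,T) be a measure preserving system with commuting transformations S and T such that for all nonzero integers i and j, μ({x : S^i x = x}) = 0 and μ({x : T^j x = x}) = 0. Let S* = id×S×id×S and T* = id×id×T×T acting on X⁴. Then μ_{S,T}({(x0,x1,x2,x3) ∈ X⁴ : (S*)^i (T*)^j (x0,x1,x2,x3) ≠ (x0,x1,x2,x3) for every (i,j) ≠ (0,0)}) = 1. -/

import Mathlib

open MeasureTheory

/-- The σ-algebra of `R`-invariant measurable sets. -/
def invSigma {X : Type*} [MeasurableSpace X] (R : X → X) : MeasurableSpace X where
  MeasurableSet' s := MeasurableSet s ∧ R ⁻¹' s = s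
  measurableSet_empty := ⟨MeasurableSet.empty, rfl⟩
  measurableSet_compl s hs := ⟨hs.1.compl, by rw [Set.preimage_compl, hs.2]⟩
  measurableSet_iUnion f hf := ⟨MeasurableSet.iUnion fun i => (hf i).1, by
    rw [Set.preimage_iUnion]; exact Set.iUnion_congr fun i => (hf i).2⟩

/-- `μ2` is the relatively independent self-joining of `μ` over `I_R`. -/
def IsRelIndJoining {X : Type*} [MeasurableSpace X] (μ : Measure X) (R : X → X)
    (μ2 : Measure (X × X)) : Prop :=
  ∀ f0 f1 : X → ℝ, Measurable f0 → Measurable f1 →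
    (∃ C, ∀ x, |f0 x| ≤ C) → (∃ C, ∀ x, |f1 x| ≤ C) →
    ∫ p, f0 p.1 * f1 p.2 ∂μ2 =
      ∫ x, (μ[f0 | invSigma R]) x * (μ[f1 | invSigma R]) x ∂μ

/-- `μ4` is the relatively independent self-joining of `μ2` over `I_{T×T}`. -/
def IsHostJoining {X : Type*} [MeasurableSpace X] (μ2 : Measure (X × X)) (T : X → X)
    (μ4 : Measure (X × X × X × X)) : Prop :=
  ∀ f0 f1 f2 f3 : X → ℝ, Measurable f0 → Measurable f1 → Measurable f2 → Measurable f3 →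
    (∃ C, ∀ x, |f0 x| ≤ C) → (∃ C, ∀ x, |f1 x| ≤ C) →
    (∃ C, ∀ x, |f2 x| ≤ C) → (∃ C, ∀ x, |f3 x| ≤ C) →
    ∫ p, f0 p.1 * f1 p.2.1 * f2 p.2.2.1 * f3 p.2.2.2 ∂μ4 =
      ∫ q, (μ2[(fun r => f0 r.1 * f1 r.2) | invSigma (Prod.map T T)]) q *
           (μ2[(fun r => f2 r.1 * f3 r.2) | invSigma (Prod.map T T)]) q ∂μ2

/-- The permutation `S* = id × S × id × S` of `X⁴`. -/
def sideS {X : Type*} (S : X ≃ X) : Equiv.Perm (X × X × X × X) :=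
  (Equiv.refl X).prodCongr (S.prodCongr ((Equiv.refl X).prodCongr S))

/-- The permutation `T* = id × id × T × T` of `X⁴`. -/
def sideT {X : Type*} (T : X ≃ X) : Equiv.Perm (X × X × X × X) :=
  (Equiv.refl X).prodCongr ((Equiv.refl X).prodCongr (T.prodCongr T))

/- ### Auxiliary lemmas -/

/-- `sideS` as a monoid hom. -/
def sideSHom (X : Type*) : Equiv.Perm X →* Equiv.Perm (X × X × X × X) where
  toFun := sideS
  map_one' := Equiv.ext fun _ => rfl
  map_mul' _ _ := Equiv.ext fun _ => rfl

/-- `sideT` as a monoid hom. -/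
def sideTHom (X : Type*) : Equiv.Perm X →* Equiv.Perm (X × X × X × X) where
  toFun := sideT
  map_one' := Equiv.ext fun _ => rfl
  map_mul' _ _ := Equiv.ext fun _ => rfl

lemma sideS_zpow {X : Type*} (e : Equiv.Perm X) (i : ℤ) :
    sideS e ^ i = sideS (e ^ i) := (map_zpow (sideSHom X) e i).symm

lemma sideT_zpow {X : Type*} (e : Equiv.Perm X) (i : ℤ) :
    sideT e ^ i = sideT (e ^ i) := (map_zpow (sideTHom X) e i).symm

lemma invSigma_le {X : Type*} [m : MeasurableSpace X] (R : X → X) : invSigma R ≤ m :=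
  fun _ hs => hs.1

lemma integrable_of_bdd {Y : Type*} [MeasurableSpace Y] {ν : Measure Y} [IsFiniteMeasure ν]
    {f : Y → ℝ} (hf : Measurable f) {C : ℝ} (h : ∀ x, |f x| ≤ C) : Integrable f ν :=
  ⟨hf.aestronglyMeasurable,
    HasFiniteIntegral.of_bounded (C := C) (ae_of_all _ fun x => by
      simpa [Real.norm_eq_abs] using h x)⟩

lemma measurable_equiv_zpow {X : Type*} [MeasurableSpace X] (S : X ≃ᵐ X) (i : ℤ) :
    Measurable ⇑(S.toEquiv ^ i) := by
  induction i using Int.induction_on with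
  | zero => simpa using measurable_id
  | succ n ih =>
      rw [zpow_add_one, Equiv.Perm.coe_mul]
      exact ih.comp S.measurable
  | pred n ih =>
      rw [zpow_sub_one, Equiv.Perm.coe_mul]
      have : ⇑(S.toEquiv⁻¹) = ⇑S.symm := rfl
      rw [this]
      exact ih.comp S.symm.measurable

theorem hostMeasure_free_set_full {X : Type*} [MeasurableSpace X]
    (μ : Measure X) [IsProbabilityMeasure μ]
    (S T : X ≃ᵐ X) (hS : MeasurePreserving S μ μ) (hT : MeasurePreserving T μ μ)
    (hcomm : ∀ x, S (T x) = T (S x))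
    (hSfix : ∀ i : ℤ, i ≠ 0 → μ {x | (S.toEquiv ^ i) x = x} = 0)
    (hTfix : ∀ j : ℤ, j ≠ 0 → μ {x | (T.toEquiv ^ j) x = x} = 0)
    (μS : Measure (X × X)) (hμS : IsRelIndJoining μ ⇑S μS)
    (μST : Measure (X × X × X × X)) (hμST : IsHostJoining μS ⇑T μST) :
    μST {p : X × X × X × X | ∀ i j : ℤ, ¬(i = 0 ∧ j = 0) →
      (sideS S.toEquiv ^ i) ((sideT T.toEquiv ^ j) p) ≠ p} = 1 := by
  classical
  have hm1 : invSigma (⇑S) ≤ ‹MeasurableSpace X› := invSigma_le _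
  have hm2 : invSigma (Prod.map ⇑T ⇑T) ≤ (inferInstance : MeasurableSpace (X × X)) :=
    invSigma_le _
  have hone : ∀ x : X, |(fun _ : X => (1:ℝ)) x| ≤ 1 := fun _ => by norm_num
  -- μS is a probability measure
  have hcond1 : μ[(fun _ : X => (1:ℝ)) | invSigma ⇑S] =ᵐ[μ] fun _ => (1:ℝ) := by
    rw [condExp_const (μ := μ) hm1 (1:ℝ)]
  have hμS1 := hμS (fun _ => 1) (fun _ => 1) measurable_const measurable_const
    ⟨1, hone⟩ ⟨1, hone⟩
  have hRHS1 : ∫ x, (μ[(fun _ : X => (1:ℝ)) | invSigma ⇑S]) x *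
      (μ[(fun _ : X => (1:ℝ)) | invSigma ⇑S]) x ∂μ = 1 := by
    rw [integral_congr_ae ((hcond1.fun_mul hcond1).mono fun x hx => hx)]
    simp
  have hμSuniv : (μS Set.univ).toReal = 1 := by
    have := hμS1.trans hRHS1
    simpa [measureReal_def] using this
  haveI : IsProbabilityMeasure μS := ⟨(ENNReal.toReal_eq_one_iff _).mp hμSuniv⟩
  -- μST is a probability measure
  have hcond2 : μS[(fun _ : X × X => (1:ℝ)) | invSigma (Prod.map ⇑T ⇑T)] =ᵐ[μS]
      fun _ => (1:ℝ) := by rw [condExp_const (μ := μS) hm2 (1:ℝ)]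
  have eone : (fun r : X × X => (1:ℝ) * 1) = fun _ => (1:ℝ) := by funext r; ring
  have hμST1 := hμST (fun _ => 1) (fun _ => 1) (fun _ => 1) (fun _ => 1)
    measurable_const measurable_const measurable_const measurable_const
    ⟨1, hone⟩ ⟨1, hone⟩ ⟨1, hone⟩ ⟨1, hone⟩
  simp only [one_mul] at hμST1
  have hμSTuniv : (μST Set.univ).toReal = 1 := by
    have hR : ∫ q, (μS[(fun _ : X × X => (1:ℝ)) | invSigma (Prod.map ⇑T ⇑T)]) q *
        (μS[(fun _ : X × X => (1:ℝ)) | invSigma (Prod.map ⇑T ⇑T)]) q ∂μS = 1 := by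
      rw [integral_congr_ae ((hcond2.fun_mul hcond2).mono fun x hx => hx)]
      simp
    have := hμST1.trans hR
    simpa [measureReal_def] using this
  haveI : IsProbabilityMeasure μST := ⟨(ENNReal.toReal_eq_one_iff _).mp hμSTuniv⟩
  -- marginal of μS on either coordinate is μ
  have margS : ∀ g : X → ℝ, Measurable g → ∀ C : ℝ, (∀ x, |g x| ≤ C) →
      (∫ p : X × X, g p.2 ∂μS = ∫ x, g x ∂μ) ∧
      (∫ p : X × X, g p.1 ∂μS = ∫ x, g x ∂μ) := by
    intro g hg C hC
    have hint : Integrable g μ := integrable_of_bdd hg hC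
    constructor
    · have h := hμS (fun _ => 1) g measurable_const hg ⟨1, hone⟩ ⟨C, hC⟩
      simp only [one_mul] at h
      rw [h, integral_congr_ae ((hcond1.fun_mul (Filter.EventuallyEq.refl _ _)).mono
        fun x hx => hx)]
      simp only [one_mul]
      exact integral_condExp hm1
    · have h := hμS g (fun _ => 1) hg measurable_const ⟨C, hC⟩ ⟨1, hone⟩
      simp only [mul_one] at h
      rw [h, integral_congr_ae (((Filter.EventuallyEq.refl _ _).fun_mul hcond1).mono
        fun x hx => hx)]
      simp only [mul_one]
      exact integral_condExp hm1
  -- marginals of μST on coordinates x1 and x2 are μ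
  have marg1 : ∀ g : X → ℝ, Measurable g → ∀ C : ℝ, (∀ x, |g x| ≤ C) →
      ∫ p : X × X × X × X, g p.2.1 ∂μST = ∫ x, g x ∂μ := by
    intro g hg C hC
    have h := hμST (fun _ => 1) g (fun _ => 1) (fun _ => 1)
      measurable_const hg measurable_const measurable_const
      ⟨1, hone⟩ ⟨C, hC⟩ ⟨1, hone⟩ ⟨1, hone⟩
    simp only [one_mul, mul_one] at h
    have hg2 : Integrable (fun r : X × X => g r.2) μS :=
      integrable_of_bdd (hg.comp measurable_snd) (C := C) fun r => hC r.2
    rw [h, integral_congr_ae (((Filter.EventuallyEq.refl _ _).fun_mul hcond2).mono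
      fun x hx => hx)]
    simp only [mul_one]
    rw [integral_condExp hm2]
    exact (margS g hg C hC).1
  have marg2 : ∀ g : X → ℝ, Measurable g → ∀ C : ℝ, (∀ x, |g x| ≤ C) →
      ∫ p : X × X × X × X, g p.2.2.1 ∂μST = ∫ x, g x ∂μ := by
    intro g hg C hC
    have h := hμST (fun _ => 1) (fun _ => 1) g (fun _ => 1)
      measurable_const measurable_const hg measurable_const
      ⟨1, hone⟩ ⟨1, hone⟩ ⟨C, hC⟩ ⟨1, hone⟩
    simp only [one_mul, mul_one] at h
    have hg2 : Integrable (fun r : X × X => g r.1) μS :=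
      integrable_of_bdd (hg.comp measurable_fst) (C := C) fun r => hC r.1
    rw [h, integral_congr_ae ((hcond2.fun_mul (Filter.EventuallyEq.refl _ _)).mono
      fun x hx => hx)]
    simp only [one_mul]
    rw [integral_condExp hm2]
    exact (margS g hg C hC).2
  -- null preimages
  have nullpre : ∀ (π : X × X × X × X → X), Measurable π →
      (∀ g : X → ℝ, Measurable g → ∀ C : ℝ, (∀ x, |g x| ≤ C) →
        ∫ p, g (π p) ∂μST = ∫ x, g x ∂μ) →
      ∀ A : Set X, μ A = 0 → μST (π ⁻¹' A) = 0 := by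
    intro π hπ hmarg A hA
    obtain ⟨A', hsub, hA'm, hA'0⟩ := exists_measurable_superset_of_null hA
    have hgb : ∀ x, |(A'.indicator (1 : X → ℝ)) x| ≤ 1 := by
      intro x
      by_cases hx : x ∈ A' <;> simp [Set.indicator_apply, hx]
    have hgm : Measurable (A'.indicator (1 : X → ℝ)) :=
      measurable_one.indicator hA'm
    have h := hmarg _ hgm 1 hgb
    have hL : (fun p => (A'.indicator (1 : X → ℝ)) (π p)) =
        (π ⁻¹' A').indicator (1 : (X × X × X × X) → ℝ) := by
      funext p
      by_cases hp : π p ∈ A' <;> simp [Set.indicator_apply, hp]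
    rw [hL, integral_indicator_one (hπ hA'm), integral_indicator_one hA'm, measureReal_def, measureReal_def, hA'0] at h
    simp only [ENNReal.toReal_zero] at h
    have hfin : μST (π ⁻¹' A') ≠ ⊤ := measure_ne_top _ _
    have : μST (π ⁻¹' A') = 0 := by
      rcases (ENNReal.toReal_eq_zero_iff _).mp h with h0 | h0
      · exact h0
      · exact absurd h0 hfin
    exact measure_mono_null (Set.preimage_mono hsub) this
  have null1 : ∀ A : Set X, μ A = 0 → μST ((fun p : X × X × X × X => p.2.1) ⁻¹' A) = 0 :=
    nullpre _ (measurable_fst.comp measurable_snd) marg1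
  have null2 : ∀ A : Set X, μ A = 0 →
      μST ((fun p : X × X × X × X => p.2.2.1) ⁻¹' A) = 0 :=
    nullpre _ (measurable_fst.comp (measurable_snd.comp measurable_snd)) marg2
  -- the bad sets
  set F : ℤ → ℤ → Set (X × X × X × X) := fun i j =>
    {p | ¬(i = 0 ∧ j = 0) ∧ (sideS S.toEquiv ^ i) ((sideT T.toEquiv ^ j) p) = p} with hF
  have key : ∀ (i j : ℤ) (p : X × X × X × X),
      (sideS S.toEquiv ^ i) ((sideT T.toEquiv ^ j) p) =
        (p.1, (S.toEquiv ^ i) p.2.1, (T.toEquiv ^ j) p.2.2.1,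
          (S.toEquiv ^ i) ((T.toEquiv ^ j) p.2.2.2)) := by
    intro i j p
    rw [sideS_zpow, sideT_zpow]
    rfl
  have hFnull : ∀ i j : ℤ, μST (F i j) = 0 := by
    intro i j
    by_cases hij : i = 0 ∧ j = 0
    · refine measure_mono_null (t := ∅) (fun p hp => (hp.1 hij).elim) measure_empty
    · by_cases hj : j = 0
      · have hi : i ≠ 0 := fun h => hij ⟨h, hj⟩
        refine measure_mono_null
          (t := (fun p : X × X × X × X => p.2.1) ⁻¹' {x | (S.toEquiv ^ i) x = x})
          (fun p hp => ?_) (null1 _ (hSfix i hi))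
        have h2 := congrArg (fun q : X × X × X × X => q.2.1) ((key i j p).symm.trans hp.2)
        exact h2
      · refine measure_mono_null
          (t := (fun p : X × X × X × X => p.2.2.1) ⁻¹' {x | (T.toEquiv ^ j) x = x})
          (fun p hp => ?_) (null2 _ (hTfix j hj))
        have h2 := congrArg (fun q : X × X × X × X => q.2.2.1) ((key i j p).symm.trans hp.2)
        exact h2
  have hU : μST (⋃ i : ℤ, ⋃ j : ℤ, F i j) = 0 :=
    measure_iUnion_null fun i => measure_iUnion_null fun j => hFnull i j
  have hGeq : {p : X × X × X × X | ∀ i j : ℤ, ¬(i = 0 ∧ j = 0) →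
      (sideS S.toEquiv ^ i) ((sideT T.toEquiv ^ j) p) ≠ p} =
      (⋃ i : ℤ, ⋃ j : ℤ, F i j)ᶜ := by
    ext p
    simp only [Set.mem_setOf_eq, Set.mem_compl_iff, Set.mem_iUnion, hF, not_exists]
    constructor
    · intro h i j hij
      exact (h i j hij.1) hij.2
    · intro h i j hij heq
      exact h i j ⟨hij, heq⟩
  rw [hGeq, measure_compl₀ (NullMeasurableSet.of_null hU) (measure_ne_top _ _), hU]
  simp
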